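/- Let n ≥ 4 and consider the subspaces V_0, V_1, V_2, V_3, V_4, V_5, V_6 of ℝ^{n×n} with the S_n action (σ·X)_{ij} = X_{σ⁻¹(i),σ⁻¹(j)}. There exist S_n-equivariant linear bijections V_0 → V_1, V_2 → V_3, and V_2 → V_4; moreover, for any two distinct spaces among {V_0, V_2, V_5, V_6} there exists no S_n-equivariant linear bijection between them. -/

import Mathlib

open Matrix

namespace GraphIso

variable (n : ℕ)

variable (n : ℕ)

/-- The action of `Sₙ` on `n × n` matrices: `(σ · X) i j = X (σ⁻¹ i) (σ⁻¹ j)`. -/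
def act (σ : Equiv.Perm (Fin n)) (X : Matrix (Fin n) (Fin n) ℝ) :
    Matrix (Fin n) (Fin n) ℝ :=
  Matrix.of fun i j => X (σ⁻¹ i) (σ⁻¹ j)

/-- The all-ones matrix `J`. -/
def J : Matrix (Fin n) (Fin n) ℝ := Matrix.of fun _ _ => (1 : ℝ)

/-- `V₀`: multiples of the identity. -/
def V0 : Submodule ℝ (Matrix (Fin n) (Fin n) ℝ) where
  carrier := {X | ∃ a : ℝ, X = a • (1 : Matrix (Fin n) (Fin n) ℝ)}
  zero_mem' := ⟨0, by simp⟩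
  add_mem' := by
    rintro X Y ⟨a, rfl⟩ ⟨b, rfl⟩
    exact ⟨a + b, (add_smul a b _).symm⟩
  smul_mem' := by
    rintro c X ⟨a, rfl⟩
    exact ⟨c * a, (mul_smul c a _).symm⟩

/-- `V₁`: multiples of `J - I`. -/
def V1 : Submodule ℝ (Matrix (Fin n) (Fin n) ℝ) where
  carrier := {X | ∃ a : ℝ, X = a • (J n - 1)}
  zero_mem' := ⟨0, by simp⟩
  add_mem' := by
    rintro X Y ⟨a, rfl⟩ ⟨b, rfl⟩
    exact ⟨a + b, (add_smul a b _).symm⟩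
  smul_mem' := by
    rintro c X ⟨a, rfl⟩
    exact ⟨c * a, (mul_smul c a _).symm⟩

/-- `V₂`: diagonal matrices with trace zero. -/
def V2 : Submodule ℝ (Matrix (Fin n) (Fin n) ℝ) where
  carrier := {X | (∀ i j, i ≠ j → X i j = 0) ∧ ∑ i, X i i = 0}
  zero_mem' := ⟨fun _ _ _ => rfl, by simp⟩
  add_mem' := by
    rintro X Y ⟨hX1, hX2⟩ ⟨hY1, hY2⟩
    refine ⟨fun i j hij => ?_, ?_⟩
    · simp [Matrix.add_apply, hX1 i j hij, hY1 i j hij]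
    · simp [Matrix.add_apply, Finset.sum_add_distrib, hX2, hY2]
  smul_mem' := by
    rintro c X ⟨hX1, hX2⟩
    refine ⟨fun i j hij => ?_, ?_⟩
    · simp [Matrix.smul_apply, hX1 i j hij]
    · simp [Matrix.smul_apply, ← Finset.mul_sum, hX2]

/-- `V₃`: matrices `r ⬝ 1ᵀ` with constant rows, `∑ rᵢ = 0`. -/
def V3 : Submodule ℝ (Matrix (Fin n) (Fin n) ℝ) where
  carrier := {X | ∃ r : Fin n → ℝ, (∑ i, r i) = 0 ∧ X = Matrix.of fun i _ => r i}
  zero_mem' := ⟨0, by simp, rfl⟩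
  add_mem' := by
    rintro X Y ⟨r, hr, rfl⟩ ⟨r', hr', rfl⟩
    exact ⟨r + r', by simp [Finset.sum_add_distrib, hr, hr'], by ext i j; simp⟩
  smul_mem' := by
    rintro c X ⟨r, hr, rfl⟩
    exact ⟨c • r, by simp [← Finset.mul_sum, hr], by ext i j; simp⟩

/-- `V₄`: matrices `1 ⬝ cᵀ` with constant columns, `∑ cⱼ = 0`. -/
def V4 : Submodule ℝ (Matrix (Fin n) (Fin n) ℝ) where
  carrier := {X | ∃ c : Fin n → ℝ, (∑ j, c j) = 0 ∧ X = Matrix.of fun _ j => c j}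
  zero_mem' := ⟨0, by simp, rfl⟩
  add_mem' := by
    rintro X Y ⟨r, hr, rfl⟩ ⟨r', hr', rfl⟩
    exact ⟨r + r', by simp [Finset.sum_add_distrib, hr, hr'], by ext i j; simp⟩
  smul_mem' := by
    rintro c X ⟨r, hr, rfl⟩
    exact ⟨c • r, by simp [← Finset.mul_sum, hr], by ext i j; simp⟩

/-- `V₅`: antisymmetric matrices whose rows sum to zero. -/
def V5 : Submodule ℝ (Matrix (Fin n) (Fin n) ℝ) where
  carrier := {X | X = -Xᵀ ∧ ∀ i, ∑ j, X i j = 0}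
  zero_mem' := ⟨by simp, by simp⟩
  add_mem' := by
    rintro X Y ⟨hX1, hX2⟩ ⟨hY1, hY2⟩
    refine ⟨?_, fun i => ?_⟩
    · rw [Matrix.transpose_add, neg_add]
      exact congrArg₂ (· + ·) hX1 hY1
    · simp [Matrix.add_apply, Finset.sum_add_distrib, hX2 i, hY2 i]
  smul_mem' := by
    rintro c X ⟨hX1, hX2⟩
    refine ⟨?_, fun i => ?_⟩
    · rw [Matrix.transpose_smul, ← smul_neg]
      exact congrArg (c • ·) hX1
    · simp [Matrix.smul_apply, ← Finset.mul_sum, hX2 i]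

/-- `V₆`: symmetric matrices with zero diagonal whose rows sum to zero. -/
def V6 : Submodule ℝ (Matrix (Fin n) (Fin n) ℝ) where
  carrier := {X | X = Xᵀ ∧ (∀ i, ∑ j, X i j = 0) ∧ ∀ i, X i i = 0}
  zero_mem' := ⟨by simp, by simp, by simp⟩
  add_mem' := by
    rintro X Y ⟨hX1, hX2, hX3⟩ ⟨hY1, hY2, hY3⟩
    refine ⟨?_, fun i => ?_, fun i => ?_⟩
    · rw [Matrix.transpose_add]
      exact congrArg₂ (· + ·) hX1 hY1
    · simp [Matrix.add_apply, Finset.sum_add_distrib, hX2 i, hY2 i]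
    · simp [Matrix.add_apply, hX3 i, hY3 i]
  smul_mem' := by
    rintro c X ⟨hX1, hX2, hX3⟩
    refine ⟨?_, fun i => ?_, fun i => ?_⟩
    · rw [Matrix.transpose_smul]
      exact congrArg (c • ·) hX1
    · simp [Matrix.smul_apply, ← Finset.mul_sum, hX2 i]
    · simp [Matrix.smul_apply, hX3 i]


/-- The family of the seven subspaces `V₀, …, V₆`. -/
def V : Fin 7 → Submodule ℝ (Matrix (Fin n) (Fin n) ℝ) :=
  ![V0 n, V1 n, V2 n, V3 n, V4 n, V5 n, V6 n]

/-- A linear map `L` between two subspaces of `ℝⁿˣⁿ` is `Sₙ`-equivariant if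
`L (σ · X) = σ · L X` for all `σ` and all `X` (whenever `σ · X` lies in the
source subspace). -/
def IsEquivariantMap {U W : Submodule ℝ (Matrix (Fin n) (Fin n) ℝ)}
    (L : U →ₗ[ℝ] W) : Prop :=
  ∀ (σ : Equiv.Perm (Fin n)) (X : U) (h : act n σ (X : Matrix (Fin n) (Fin n) ℝ) ∈ U),
    ((L ⟨act n σ (X : Matrix (Fin n) (Fin n) ℝ), h⟩ : W) : Matrix (Fin n) (Fin n) ℝ)
      = act n σ ((L X : W) : Matrix (Fin n) (Fin n) ℝ)

lemma act_apply (σ : Equiv.Perm (Fin n)) (X : Matrix (Fin n) (Fin n) ℝ) (i j : Fin n) :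
    act n σ X i j = X (σ⁻¹ i) (σ⁻¹ j) := rfl

/-- transfer of eigen-relations along equivariant maps -/
lemma transfer_eigen {U W : Submodule ℝ (Matrix (Fin n) (Fin n) ℝ)} (L : U →ₗ[ℝ] W)
    (hL : IsEquivariantMap n L) (σ : Equiv.Perm (Fin n)) (X : U) (ε : ℝ)
    (h : act n σ (X : Matrix (Fin n) (Fin n) ℝ) = ε • (X : Matrix (Fin n) (Fin n) ℝ)) :
    act n σ ((L X : W) : Matrix (Fin n) (Fin n) ℝ)
      = ε • ((L X : W) : Matrix (Fin n) (Fin n) ℝ) := by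
  have hmem : act n σ (X : Matrix (Fin n) (Fin n) ℝ) ∈ U := by
    rw [h]; exact U.smul_mem ε X.2
  have heq := hL σ X hmem
  have hsub : (⟨act n σ (X : Matrix (Fin n) (Fin n) ℝ), hmem⟩ : U) = ε • X :=
    Subtype.ext (by simpa using h)
  rw [hsub, _root_.map_smul] at heq
  rw [← heq]
  rfl

lemma kill_of_zero {U W : Submodule ℝ (Matrix (Fin n) (Fin n) ℝ)} (L : U →ₗ[ℝ] W)
    (hb : Function.Bijective L) (X : U) (h : ((L X : W) : Matrix (Fin n) (Fin n) ℝ) = 0) :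
    (X : Matrix (Fin n) (Fin n) ℝ) = 0 := by
  have h1 : L X = 0 := Subtype.ext h
  have h2 : X = 0 := hb.injective (by rw [h1, map_zero])
  rw [h2]; rfl
/-- indicator difference vector: 1 at `a`, -1 at `b`, 0 elsewhere -/
def indv (a b : Fin n) : Fin n → ℝ := fun i => if i = a then 1 else if i = b then -1 else 0

lemma indv_self (a b : Fin n) : indv n a b a = 1 := by simp [indv]

lemma indv_other (a b x : Fin n) (hxa : x ≠ a) (hxb : x ≠ b) : indv n a b x = 0 := by
  simp [indv, hxa, hxb]

lemma sum_indv (a b : Fin n) (hab : a ≠ b) : ∑ i, indv n a b i = 0 := by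
  have : ∀ i, indv n a b i
      = (if i = a then (1:ℝ) else 0) + (if i = b then (-1:ℝ) else 0) := by
    intro i
    rcases eq_or_ne i a with rfl | hia
    · simp [indv, hab]
    · rcases eq_or_ne i b with rfl | hib
      · simp [indv, hia]
      · simp [indv, hia, hib]
  simp only [this, Finset.sum_add_distrib]
  rw [Finset.sum_ite_eq' Finset.univ a (fun _ => (1:ℝ)),
      Finset.sum_ite_eq' Finset.univ b (fun _ => (-1:ℝ))]
  simp

lemma indv_swap_self (a b : Fin n) (hab : a ≠ b) (x : Fin n) :
    indv n a b (Equiv.swap a b x) = - indv n a b x := by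
  rcases eq_or_ne x a with rfl | hxa
  · rw [Equiv.swap_apply_left]; simp [indv, hab, hab.symm]
  · rcases eq_or_ne x b with rfl | hxb
    · rw [Equiv.swap_apply_right]; simp [indv, hab.symm]
    · rw [Equiv.swap_apply_of_ne_of_ne hxa hxb, indv_other n a b x hxa hxb]; simp

lemma indv_swap_other (a b c d : Fin n) (hca : c ≠ a) (hcb : c ≠ b) (hda : d ≠ a) (hdb : d ≠ b)
    (x : Fin n) : indv n a b (Equiv.swap c d x) = indv n a b x := by
  rcases eq_or_ne x c with rfl | hxc
  · rw [Equiv.swap_apply_left, indv_other n a b d hda hdb, indv_other n a b x hca hcb]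
  · rcases eq_or_ne x d with rfl | hxd
    · rw [Equiv.swap_apply_right, indv_other n a b c hca hcb, indv_other n a b x hda hdb]
    · rw [Equiv.swap_apply_of_ne_of_ne hxc hxd]

lemma indv_mul_indv (a b c d : Fin n) (hac : a ≠ c) (had : a ≠ d) (hbc : b ≠ c) (hbd : b ≠ d)
    (x : Fin n) : indv n a b x * indv n c d x = 0 := by
  rcases eq_or_ne x a with rfl | hxa
  · rw [indv_other n c d x hac had, mul_zero]
  · rcases eq_or_ne x b with rfl | hxb
    · rw [indv_other n c d x hbc hbd, mul_zero]
    · rw [indv_other n a b x hxa hxb, zero_mul]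

/-- `indv` twisted by the double transposition `(a c)(b d)` -/
lemma indv_pi (a b c d : Fin n) (hab : a ≠ b) (hac : a ≠ c) (had : a ≠ d)
    (hbc : b ≠ c) (hbd : b ≠ d) (hcd : c ≠ d) (x : Fin n) :
    indv n a b (Equiv.swap b d (Equiv.swap a c x)) = indv n c d x := by
  by_cases hxa : x = a
  · rw [hxa, Equiv.swap_apply_left, Equiv.swap_apply_of_ne_of_ne hbc.symm hcd,
      indv_other n a b c hac.symm hbc.symm, indv_other n c d a hac had]
  · by_cases hxc : x = c
    · rw [hxc, Equiv.swap_apply_right, Equiv.swap_apply_of_ne_of_ne (show a ≠ b from hab) (show a ≠ d from had),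
        indv_self, indv_self]
    · rw [Equiv.swap_apply_of_ne_of_ne hxa hxc]
      by_cases hxb : x = b
      · rw [hxb, Equiv.swap_apply_left, indv_other n a b d had.symm hbd.symm,
          indv_other n c d b hbc hbd]
      · by_cases hxd : x = d
        · rw [hxd, Equiv.swap_apply_right]; simp [indv, hab.symm, hcd.symm]
        · rw [Equiv.swap_apply_of_ne_of_ne hxb hxd, indv_other n a b x hxa hxb,
            indv_other n c d x hxc hxd]
lemma indv_pi' (a b c d : Fin n) (hab : a ≠ b) (hac : a ≠ c) (had : a ≠ d)
    (hbc : b ≠ c) (hbd : b ≠ d) (hcd : c ≠ d) (x : Fin n) :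
    indv n c d (Equiv.swap b d (Equiv.swap a c x)) = indv n a b x := by
  have := indv_pi n c d a b hcd hac.symm hbc.symm had.symm hbd.symm hab x
  rwa [Equiv.swap_comm d b, Equiv.swap_comm c a] at this

/-- the antisymmetric witness -/
def wedgeM (a b c d : Fin n) : Matrix (Fin n) (Fin n) ℝ :=
  Matrix.of fun i j => indv n a b i * indv n c d j - indv n c d i * indv n a b j

/-- the symmetric witness -/
def symM (a b c d : Fin n) : Matrix (Fin n) (Fin n) ℝ :=
  Matrix.of fun i j => indv n a b i * indv n c d j + indv n c d i * indv n a b j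

lemma wedgeM_mem (a b c d : Fin n) (hab : a ≠ b) (hcd : c ≠ d) :
    wedgeM n a b c d ∈ V5 n := by
  constructor
  · ext i j
    simp only [wedgeM, Matrix.neg_apply, Matrix.transpose_apply, Matrix.of_apply]
    ring
  · intro i
    simp only [wedgeM, Matrix.of_apply]
    rw [Finset.sum_sub_distrib, ← Finset.mul_sum, ← Finset.mul_sum,
      sum_indv n a b hab, sum_indv n c d hcd]
    ring

lemma symM_mem (a b c d : Fin n) (hab : a ≠ b) (hac : a ≠ c) (had : a ≠ d)
    (hbc : b ≠ c) (hbd : b ≠ d) (hcd : c ≠ d) :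
    symM n a b c d ∈ V6 n := by
  refine ⟨?_, ?_, ?_⟩
  · ext i j
    simp only [symM, Matrix.transpose_apply, Matrix.of_apply]
    ring
  · intro i
    simp only [symM, Matrix.of_apply]
    rw [Finset.sum_add_distrib, ← Finset.mul_sum, ← Finset.mul_sum,
      sum_indv n a b hab, sum_indv n c d hcd]
    ring
  · intro i
    simp only [symM, Matrix.of_apply]
    have h1 := indv_mul_indv n a b c d hac had hbc hbd i
    have h2 := indv_mul_indv n c d a b hac.symm hbc.symm had.symm hbd.symm i
    rw [h1, h2, add_zero]

lemma act_swap_wedge_ab (a b c d : Fin n) (hab : a ≠ b) (hac : a ≠ c) (had : a ≠ d)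
    (hbc : b ≠ c) (hbd : b ≠ d) :
    act n (Equiv.swap a b) (wedgeM n a b c d) = -(wedgeM n a b c d) := by
  ext i j
  simp only [act_apply, Equiv.swap_inv, wedgeM, Matrix.neg_apply, Matrix.of_apply]
  rw [indv_swap_self n a b hab i, indv_swap_self n a b hab j,
    indv_swap_other n c d a b hac had hbc hbd i,
    indv_swap_other n c d a b hac had hbc hbd j]
  ring

lemma act_swap_wedge_cd (a b c d : Fin n) (hac : a ≠ c) (had : a ≠ d)
    (hbc : b ≠ c) (hbd : b ≠ d) (hcd : c ≠ d) :
    act n (Equiv.swap c d) (wedgeM n a b c d) = -(wedgeM n a b c d) := by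
  ext i j
  simp only [act_apply, Equiv.swap_inv, wedgeM, Matrix.neg_apply, Matrix.of_apply]
  rw [indv_swap_self n c d hcd i, indv_swap_self n c d hcd j,
    indv_swap_other n a b c d hac.symm hbc.symm had.symm hbd.symm i,
    indv_swap_other n a b c d hac.symm hbc.symm had.symm hbd.symm j]
  ring

lemma act_pi_wedge (a b c d : Fin n) (hab : a ≠ b) (hac : a ≠ c) (had : a ≠ d)
    (hbc : b ≠ c) (hbd : b ≠ d) (hcd : c ≠ d) :
    act n (Equiv.swap a c * Equiv.swap b d) (wedgeM n a b c d) = -(wedgeM n a b c d) := by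
  ext i j
  have hinv : ∀ x, (Equiv.swap a c * Equiv.swap b d : Equiv.Perm (Fin n))⁻¹ x
      = Equiv.swap b d (Equiv.swap a c x) := by
    intro x
    simp [_root_.mul_inv_rev, Equiv.swap_inv, Equiv.Perm.mul_apply]
  simp only [act_apply, wedgeM, Matrix.neg_apply, Matrix.of_apply, hinv]
  rw [indv_pi n a b c d hab hac had hbc hbd hcd i,
    indv_pi n a b c d hab hac had hbc hbd hcd j,
    indv_pi' n a b c d hab hac had hbc hbd hcd i,
    indv_pi' n a b c d hab hac had hbc hbd hcd j]
  ring

lemma act_swap_sym_ab (a b c d : Fin n) (hab : a ≠ b) (hac : a ≠ c) (had : a ≠ d)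
    (hbc : b ≠ c) (hbd : b ≠ d) :
    act n (Equiv.swap a b) (symM n a b c d) = -(symM n a b c d) := by
  ext i j
  simp only [act_apply, Equiv.swap_inv, symM, Matrix.neg_apply, Matrix.of_apply]
  rw [indv_swap_self n a b hab i, indv_swap_self n a b hab j,
    indv_swap_other n c d a b hac had hbc hbd i,
    indv_swap_other n c d a b hac had hbc hbd j]
  ring

lemma act_swap_sym_cd (a b c d : Fin n) (hac : a ≠ c) (had : a ≠ d)
    (hbc : b ≠ c) (hbd : b ≠ d) (hcd : c ≠ d) :
    act n (Equiv.swap c d) (symM n a b c d) = -(symM n a b c d) := by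
  ext i j
  simp only [act_apply, Equiv.swap_inv, symM, Matrix.neg_apply, Matrix.of_apply]
  rw [indv_swap_self n c d hcd i, indv_swap_self n c d hcd j,
    indv_swap_other n a b c d hac.symm hbc.symm had.symm hbd.symm i,
    indv_swap_other n a b c d hac.symm hbc.symm had.symm hbd.symm j]
  ring

lemma act_pi_sym (a b c d : Fin n) (hab : a ≠ b) (hac : a ≠ c) (had : a ≠ d)
    (hbc : b ≠ c) (hbd : b ≠ d) (hcd : c ≠ d) :
    act n (Equiv.swap a c * Equiv.swap b d) (symM n a b c d) = symM n a b c d := by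
  ext i j
  have hinv : ∀ x, (Equiv.swap a c * Equiv.swap b d : Equiv.Perm (Fin n))⁻¹ x
      = Equiv.swap b d (Equiv.swap a c x) := by
    intro x
    simp [_root_.mul_inv_rev, Equiv.swap_inv, Equiv.Perm.mul_apply]
  simp only [act_apply, symM, Matrix.of_apply, hinv]
  rw [indv_pi n a b c d hab hac had hbc hbd hcd i,
    indv_pi n a b c d hab hac had hbc hbd hcd j,
    indv_pi' n a b c d hab hac had hbc hbd hcd i,
    indv_pi' n a b c d hab hac had hbc hbd hcd j]
  ring

lemma wedgeM_ne (a b c d : Fin n) (hac : a ≠ c) (had : a ≠ d) (hbc : b ≠ c) :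
    wedgeM n a b c d ≠ 0 := by
  intro h
  have := Matrix.ext_iff.2 h a c
  rw [Matrix.zero_apply] at this
  simp only [wedgeM, Matrix.of_apply, indv_self] at this
  rw [indv_other n c d a hac had, indv_other n a b c hac.symm hbc.symm] at this
  simp at this

lemma symM_ne (a b c d : Fin n) (hab : a ≠ b) (hac : a ≠ c) (had : a ≠ d)
    (hbc : b ≠ c) (hbd : b ≠ d) (hcd : c ≠ d) : symM n a b c d ≠ 0 := by
  intro h
  have := Matrix.ext_iff.2 h a c
  rw [Matrix.zero_apply] at this
  simp only [symM, Matrix.of_apply, indv_self] at this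
  rw [indv_other n c d a hac had, indv_other n a b c hac.symm hbc.symm] at this
  simp at this
/-- diagonal witness in `V₂`, eigenvalue `-1` for `swap a b` -/
def diagI (a b : Fin n) : Matrix (Fin n) (Fin n) ℝ :=
  Matrix.of fun i j => if i = j then indv n a b i else 0

lemma diagI_mem (a b : Fin n) (hab : a ≠ b) : diagI n a b ∈ V2 n := by
  constructor
  · intro i j hij
    simp [diagI, hij]
  · simp only [diagI, Matrix.of_apply, if_pos rfl]
    exact sum_indv n a b hab

lemma diagI_ne (a b : Fin n) : diagI n a b ≠ 0 := by
  intro h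
  have := Matrix.ext_iff.2 h a a
  simp [diagI, indv_self] at this

lemma act_swap_diagI (a b : Fin n) (hab : a ≠ b) :
    act n (Equiv.swap a b) (diagI n a b) = -(diagI n a b) := by
  ext i j
  simp only [act_apply, Equiv.swap_inv, diagI, Matrix.neg_apply, Matrix.of_apply]
  by_cases hij : i = j
  · subst hij
    simp [indv_swap_self n a b hab i]
  · rw [if_neg hij, if_neg (fun h => hij ((Equiv.swap a b).injective h)), neg_zero]

/-- the witness in `V₂` fixed by all permutations fixing `z` -/
def DM (z : Fin n) : Matrix (Fin n) (Fin n) ℝ :=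
  Matrix.of fun i j => if i = j then ((if i = z then (n : ℝ) else 0) - 1) else 0

lemma DM_mem (z : Fin n) : DM n z ∈ V2 n := by
  constructor
  · intro i j hij
    simp [DM, hij]
  · have h : ∀ i : Fin n, DM n z i i = (if i = z then (n : ℝ) else 0) - 1 := by
      intro i; simp [DM]
    rw [Finset.sum_congr rfl (fun i _ => h i), Finset.sum_sub_distrib,
      Finset.sum_ite_eq' Finset.univ z (fun _ => (n : ℝ))]
    simp

lemma DM_ne (hn : 4 ≤ n) (z : Fin n) : DM n z ≠ 0 := by
  intro h
  have := Matrix.ext_iff.2 h z z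
  simp [DM] at this
  have hc : (4 : ℝ) ≤ (n : ℝ) := by exact_mod_cast hn
  linarith

lemma act_DM (z : Fin n) (σ : Equiv.Perm (Fin n)) (hσ : σ z = z) :
    act n σ (DM n z) = DM n z := by
  have hz : σ⁻¹ z = z := by
    nth_rewrite 1 [← hσ]
    exact σ.symm_apply_apply z
  ext i j
  simp only [act_apply, DM, Matrix.of_apply]
  have h1 : (σ⁻¹ i = σ⁻¹ j) ↔ i = j := (Equiv.apply_eq_iff_eq σ⁻¹)
  have h2 : (σ⁻¹ i = z) ↔ i = z := by
    constructor
    · intro h; have := congrArg σ h; rwa [show σ (σ⁻¹ i) = i from σ.apply_symm_apply i, hσ] at this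
    · intro h; rw [h, hz]
  by_cases hij : i = j
  · subst hij
    rw [if_pos rfl, if_pos rfl]
    by_cases hiz : i = z
    · rw [if_pos (h2.2 hiz), if_pos hiz]
    · rw [if_neg (fun h => hiz (h2.1 h)), if_neg hiz]
  · rw [if_neg (fun h => hij (h1.1 h)), if_neg hij]

lemma act_one (σ : Equiv.Perm (Fin n)) :
    act n σ (1 : Matrix (Fin n) (Fin n) ℝ) = 1 := by
  ext i j
  simp only [act_apply, Matrix.one_apply]
  by_cases hij : i = j
  · subst hij; rw [if_pos rfl, if_pos rfl]
  · rw [if_neg (fun h => hij ((Equiv.apply_eq_iff_eq σ⁻¹).1 h)), if_neg hij]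

lemma one_matrix_ne (hn : 4 ≤ n) : (1 : Matrix (Fin n) (Fin n) ℝ) ≠ 0 := by
  intro h
  have := Matrix.ext_iff.2 h ⟨0, by omega⟩ ⟨0, by omega⟩
  simp [Matrix.one_apply] at this

lemma sum_if_one (z : Fin n) (c : ℝ) :
    ∑ j, (if j = z then (0 : ℝ) else c) = ((n : ℝ) - 1) * c := by
  have h : ∀ j : Fin n, (if j = z then (0 : ℝ) else c) = c - (if j = z then c else 0) := by
    intro j; split <;> ring
  rw [Finset.sum_congr rfl (fun j _ => h j), Finset.sum_sub_distrib,
    Finset.sum_ite_eq' Finset.univ z (fun _ => c), Finset.sum_const, Finset.card_univ,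
    Fintype.card_fin]
  simp [nsmul_eq_mul]
  ring

lemma sum_if_two (z o : Fin n) (hzo : z ≠ o) (c : ℝ) :
    ∑ j, (if j = z then (0 : ℝ) else if j = o then 0 else c) = ((n : ℝ) - 2) * c := by
  have h : ∀ j : Fin n, (if j = z then (0 : ℝ) else if j = o then 0 else c)
      = c - (if j = z then c else 0) - (if j = o then c else 0) := by
    intro j
    by_cases hjz : j = z
    · subst hjz; rw [if_pos rfl, if_pos rfl, if_neg hzo]; ring
    · rw [if_neg hjz, if_neg hjz]
      by_cases hjo : j = o
      · subst hjo; rw [if_pos rfl, if_pos rfl]; ring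
      · rw [if_neg hjo, if_neg hjo]; ring
  rw [Finset.sum_congr rfl (fun j _ => h j)]
  rw [Finset.sum_sub_distrib, Finset.sum_sub_distrib,
    Finset.sum_ite_eq' Finset.univ z (fun _ => c), Finset.sum_ite_eq' Finset.univ o (fun _ => c),
    Finset.sum_const, Finset.card_univ, Fintype.card_fin]
  simp [nsmul_eq_mul]
  ring
lemma V0_refute (a b c : Fin n) (hca : c ≠ a) (hcb : c ≠ b)
    (w : Matrix (Fin n) (Fin n) ℝ) (hw : w ∈ V0 n)
    (h1 : act n (Equiv.swap a b) w = -w) : w = 0 := by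
  obtain ⟨x, rfl⟩ := hw
  have h := Matrix.ext_iff.2 h1 c c
  rw [act_apply, Equiv.swap_inv, Equiv.swap_apply_of_ne_of_ne hca hcb,
    Matrix.neg_apply] at h
  simp [Matrix.smul_apply, Matrix.one_apply] at h
  have hx : x = 0 := by linarith
  rw [hx, zero_smul]

lemma V2_refute (a b c d : Fin n) (hac : a ≠ c) (had : a ≠ d) (hbc : b ≠ c) (hbd : b ≠ d)
    (w : Matrix (Fin n) (Fin n) ℝ) (hw : w ∈ V2 n)
    (h1 : act n (Equiv.swap a b) w = -w) (h2 : act n (Equiv.swap c d) w = -w) : w = 0 := by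
  obtain ⟨hoff, -⟩ := hw
  have e1 : ∀ i j, w (Equiv.swap a b i) (Equiv.swap a b j) = -w i j := by
    intro i j
    have := Matrix.ext_iff.2 h1 i j
    rwa [act_apply, Equiv.swap_inv, Matrix.neg_apply] at this
  have e2 : ∀ i j, w (Equiv.swap c d i) (Equiv.swap c d j) = -w i j := by
    intro i j
    have := Matrix.ext_iff.2 h2 i j
    rwa [act_apply, Equiv.swap_inv, Matrix.neg_apply] at this
  ext i j
  rw [Matrix.zero_apply]
  by_cases hij : i = j
  · subst hij
    by_cases hia : i = a
    · have := e2 i i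
      rw [hia, Equiv.swap_apply_of_ne_of_ne hac had] at this
      rw [hia]; linarith
    · by_cases hib : i = b
      · have := e2 i i
        rw [hib, Equiv.swap_apply_of_ne_of_ne hbc hbd] at this
        rw [hib]; linarith
      · have := e1 i i
        rw [Equiv.swap_apply_of_ne_of_ne hia hib] at this
        linarith
  · exact hoff i j hij

lemma V5_refute (a b c d : Fin n) (hab : a ≠ b) (hac : a ≠ c) (had : a ≠ d)
    (hbc : b ≠ c) (hbd : b ≠ d) (hcd : c ≠ d)
    (w : Matrix (Fin n) (Fin n) ℝ) (hw : w ∈ V5 n)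
    (h1 : act n (Equiv.swap a b) w = -w) (h2 : act n (Equiv.swap c d) w = -w)
    (h3 : act n (Equiv.swap a c * Equiv.swap b d) w = w) : w = 0 := by
  obtain ⟨hT, -⟩ := hw
  have hanti : ∀ i j, w j i = -w i j := by
    intro i j
    have := Matrix.ext_iff.2 hT j i
    rwa [Matrix.neg_apply, Matrix.transpose_apply] at this
  have e1 : ∀ i j, w (Equiv.swap a b i) (Equiv.swap a b j) = -w i j := by
    intro i j
    have := Matrix.ext_iff.2 h1 i j
    rwa [act_apply, Equiv.swap_inv, Matrix.neg_apply] at this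
  have e2 : ∀ i j, w (Equiv.swap c d i) (Equiv.swap c d j) = -w i j := by
    intro i j
    have := Matrix.ext_iff.2 h2 i j
    rwa [act_apply, Equiv.swap_inv, Matrix.neg_apply] at this
  have hinv : ∀ x, (Equiv.swap a c * Equiv.swap b d : Equiv.Perm (Fin n))⁻¹ x
      = Equiv.swap b d (Equiv.swap a c x) := by
    intro x
    simp [_root_.mul_inv_rev, Equiv.swap_inv, Equiv.Perm.mul_apply]
  have e3 : ∀ i j, w (Equiv.swap b d (Equiv.swap a c i)) (Equiv.swap b d (Equiv.swap a c j))
      = w i j := by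
    intro i j
    have := Matrix.ext_iff.2 h3 i j
    rwa [act_apply, hinv, hinv] at this
  have key1 : w a c = 0 := by
    have h := e3 a c
    rw [Equiv.swap_apply_left, Equiv.swap_apply_of_ne_of_ne hbc.symm hcd,
      Equiv.swap_apply_right, Equiv.swap_apply_of_ne_of_ne hab had] at h
    have := hanti a c
    linarith
  have key2 : w a d = 0 := by
    have h := e2 a c
    rw [Equiv.swap_apply_of_ne_of_ne hac had, Equiv.swap_apply_left] at h
    rw [h, key1, neg_zero]
  have key3 : w b c = 0 := by
    have h := e1 a c
    rw [Equiv.swap_apply_left, Equiv.swap_apply_of_ne_of_ne hac.symm hbc.symm] at h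
    rw [h, key1, neg_zero]
  have key4 : w b d = 0 := by
    have h := e1 a d
    rw [Equiv.swap_apply_left, Equiv.swap_apply_of_ne_of_ne had.symm hbd.symm] at h
    rw [h, key2, neg_zero]
  have hkey : ∀ i j, (i = a ∨ i = b) → (j = c ∨ j = d) → w i j = 0 := by
    rintro i j (rfl | rfl) (rfl | rfl)
    exacts [key1, key2, key3, key4]
  have z1 : ∀ i j, i ≠ a → i ≠ b → j ≠ a → j ≠ b → w i j = 0 := by
    intro i j hia hib hja hjb
    have := e1 i j
    rw [Equiv.swap_apply_of_ne_of_ne hia hib, Equiv.swap_apply_of_ne_of_ne hja hjb] at this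
    linarith
  have z2 : ∀ i j, i ≠ c → i ≠ d → j ≠ c → j ≠ d → w i j = 0 := by
    intro i j hic hid hjc hjd
    have := e2 i j
    rw [Equiv.swap_apply_of_ne_of_ne hic hid, Equiv.swap_apply_of_ne_of_ne hjc hjd] at this
    linarith
  ext i j
  rw [Matrix.zero_apply]
  by_cases hi : i = a ∨ i = b
  · by_cases hj : j = c ∨ j = d
    · exact hkey i j hi hj
    · push_neg at hj
      have hic : i ≠ c := by rcases hi with h | h <;> rw [h]; exacts [hac, hbc]
      have hid : i ≠ d := by rcases hi with h | h <;> rw [h]; exacts [had, hbd]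
      exact z2 i j hic hid hj.1 hj.2
  · push_neg at hi
    by_cases hj : j = a ∨ j = b
    · have hji : w j i = 0 := by
        by_cases hic : i = c ∨ i = d
        · exact hkey j i hj hic
        · push_neg at hic
          have hjc : j ≠ c := by rcases hj with h | h <;> rw [h]; exacts [hac, hbc]
          have hjd : j ≠ d := by rcases hj with h | h <;> rw [h]; exacts [had, hbd]
          exact z2 j i hjc hjd hic.1 hic.2
      rw [hanti j i, hji, neg_zero]
    · push_neg at hj
      exact z1 i j hi.1 hi.2 hj.1 hj.2

lemma V6_refute (a b c d : Fin n) (hab : a ≠ b) (hac : a ≠ c) (had : a ≠ d)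
    (hbc : b ≠ c) (hbd : b ≠ d) (hcd : c ≠ d)
    (w : Matrix (Fin n) (Fin n) ℝ) (hw : w ∈ V6 n)
    (h1 : act n (Equiv.swap a b) w = -w) (h2 : act n (Equiv.swap c d) w = -w)
    (h3 : act n (Equiv.swap a c * Equiv.swap b d) w = -w) : w = 0 := by
  obtain ⟨hT, -, -⟩ := hw
  have hsym : ∀ i j, w j i = w i j := by
    intro i j
    have := Matrix.ext_iff.2 hT j i
    rwa [Matrix.transpose_apply] at this
  have e1 : ∀ i j, w (Equiv.swap a b i) (Equiv.swap a b j) = -w i j := by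
    intro i j
    have := Matrix.ext_iff.2 h1 i j
    rwa [act_apply, Equiv.swap_inv, Matrix.neg_apply] at this
  have e2 : ∀ i j, w (Equiv.swap c d i) (Equiv.swap c d j) = -w i j := by
    intro i j
    have := Matrix.ext_iff.2 h2 i j
    rwa [act_apply, Equiv.swap_inv, Matrix.neg_apply] at this
  have hinv : ∀ x, (Equiv.swap a c * Equiv.swap b d : Equiv.Perm (Fin n))⁻¹ x
      = Equiv.swap b d (Equiv.swap a c x) := by
    intro x
    simp [_root_.mul_inv_rev, Equiv.swap_inv, Equiv.Perm.mul_apply]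
  have e3 : ∀ i j, w (Equiv.swap b d (Equiv.swap a c i)) (Equiv.swap b d (Equiv.swap a c j))
      = -w i j := by
    intro i j
    have := Matrix.ext_iff.2 h3 i j
    rwa [act_apply, hinv, hinv, Matrix.neg_apply] at this
  have key1 : w a c = 0 := by
    have h := e3 a c
    rw [Equiv.swap_apply_left, Equiv.swap_apply_of_ne_of_ne hbc.symm hcd,
      Equiv.swap_apply_right, Equiv.swap_apply_of_ne_of_ne hab had] at h
    have := hsym a c
    linarith
  have key2 : w a d = 0 := by
    have h := e2 a c
    rw [Equiv.swap_apply_of_ne_of_ne hac had, Equiv.swap_apply_left] at h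
    rw [h, key1, neg_zero]
  have key3 : w b c = 0 := by
    have h := e1 a c
    rw [Equiv.swap_apply_left, Equiv.swap_apply_of_ne_of_ne hac.symm hbc.symm] at h
    rw [h, key1, neg_zero]
  have key4 : w b d = 0 := by
    have h := e1 a d
    rw [Equiv.swap_apply_left, Equiv.swap_apply_of_ne_of_ne had.symm hbd.symm] at h
    rw [h, key2, neg_zero]
  have hkey : ∀ i j, (i = a ∨ i = b) → (j = c ∨ j = d) → w i j = 0 := by
    rintro i j (rfl | rfl) (rfl | rfl)
    exacts [key1, key2, key3, key4]
  have z1 : ∀ i j, i ≠ a → i ≠ b → j ≠ a → j ≠ b → w i j = 0 := by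
    intro i j hia hib hja hjb
    have := e1 i j
    rw [Equiv.swap_apply_of_ne_of_ne hia hib, Equiv.swap_apply_of_ne_of_ne hja hjb] at this
    linarith
  have z2 : ∀ i j, i ≠ c → i ≠ d → j ≠ c → j ≠ d → w i j = 0 := by
    intro i j hic hid hjc hjd
    have := e2 i j
    rw [Equiv.swap_apply_of_ne_of_ne hic hid, Equiv.swap_apply_of_ne_of_ne hjc hjd] at this
    linarith
  ext i j
  rw [Matrix.zero_apply]
  by_cases hi : i = a ∨ i = b
  · by_cases hj : j = c ∨ j = d
    · exact hkey i j hi hj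
    · push_neg at hj
      have hic : i ≠ c := by rcases hi with h | h <;> rw [h]; exacts [hac, hbc]
      have hid : i ≠ d := by rcases hi with h | h <;> rw [h]; exacts [had, hbd]
      exact z2 i j hic hid hj.1 hj.2
  · push_neg at hi
    by_cases hj : j = a ∨ j = b
    · have hji : w j i = 0 := by
        by_cases hic : i = c ∨ i = d
        · exact hkey j i hj hic
        · push_neg at hic
          have hjc : j ≠ c := by rcases hj with h | h <;> rw [h]; exacts [hac, hbc]
          have hjd : j ≠ d := by rcases hj with h | h <;> rw [h]; exacts [had, hbd]
          exact z2 j i hjc hjd hic.1 hic.2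
      rw [← hsym i j]
      exact hji
    · push_neg at hj
      exact z1 i j hi.1 hi.2 hj.1 hj.2
lemma C2_refute (hn : 4 ≤ n) (w : Matrix (Fin n) (Fin n) ℝ) (hw : w ∈ V2 n)
    (hfix : ∀ σ : Equiv.Perm (Fin n), act n σ w = w) : w = 0 := by
  obtain ⟨hoff, htr⟩ := hw
  have z : Fin n := ⟨0, by omega⟩
  have hdg : ∀ i, w i i = w z z := by
    intro i
    have := Matrix.ext_iff.2 (hfix (Equiv.swap z i)) i i
    rw [act_apply, Equiv.swap_inv, Equiv.swap_apply_right] at this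
    exact this.symm
  have hzz : w z z = 0 := by
    have hs : ∑ i, w i i = ∑ _i : Fin n, w z z := Finset.sum_congr rfl (fun i _ => hdg i)
    rw [htr, Finset.sum_const, Finset.card_univ, Fintype.card_fin, nsmul_eq_mul] at hs
    have hn' : (n : ℝ) ≠ 0 := by
      have : (4 : ℝ) ≤ (n : ℝ) := by exact_mod_cast hn
      linarith
    exact (mul_eq_zero.mp hs.symm).resolve_left hn'
  ext i j
  rw [Matrix.zero_apply]
  by_cases hij : i = j
  · rw [hij, hdg j, hzz]
  · exact hoff i j hij

lemma A5_refute (hn : 4 ≤ n) (z o : Fin n) (hzo : z ≠ o)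
    (w : Matrix (Fin n) (Fin n) ℝ) (hw : w ∈ V5 n)
    (hfix : ∀ σ : Equiv.Perm (Fin n), σ z = z → act n σ w = w) : w = 0 := by
  obtain ⟨hT, hrow⟩ := hw
  have hanti : ∀ i j, w j i = -w i j := by
    intro i j
    have := Matrix.ext_iff.2 hT j i
    rwa [Matrix.neg_apply, Matrix.transpose_apply] at this
  have e : ∀ p q : Fin n, p ≠ z → q ≠ z →
      ∀ i j, w (Equiv.swap p q i) (Equiv.swap p q j) = w i j := by
    intro p q hp hq i j
    have hfz : Equiv.swap p q z = z := Equiv.swap_apply_of_ne_of_ne hp.symm hq.symm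
    have := Matrix.ext_iff.2 (hfix (Equiv.swap p q) hfz) i j
    rwa [act_apply, Equiv.swap_inv] at this
  have step1 : ∀ i j, i ≠ z → j ≠ z → w i j = 0 := by
    intro i j hiz hjz
    by_cases hij : i = j
    · rw [hij]; have := hanti j j; linarith
    · have h := e i j hiz hjz i j
      rw [Equiv.swap_apply_left, Equiv.swap_apply_right] at h
      have h2 := hanti i j
      linarith
  have step2 : ∀ j, j ≠ z → w z j = w z o := by
    intro j hjz
    by_cases hjo : j = o
    · rw [hjo]
    · have h := e j o hjz hzo.symm z j
      rw [Equiv.swap_apply_of_ne_of_ne hjz.symm hzo, Equiv.swap_apply_left] at h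
      exact h.symm
  have hzo0 : w z o = 0 := by
    have hs := hrow z
    have hptw : ∀ j, w z j = (if j = z then (0 : ℝ) else w z o) := by
      intro j
      by_cases hjz : j = z
      · rw [if_pos hjz, hjz]; have := hanti z z; linarith
      · rw [if_neg hjz]; exact step2 j hjz
    rw [Finset.sum_congr rfl (fun j _ => hptw j), sum_if_one n z (w z o)] at hs
    have hc : (n : ℝ) - 1 ≠ 0 := by
      have : (4 : ℝ) ≤ (n : ℝ) := by exact_mod_cast hn
      linarith
    exact (mul_eq_zero.mp hs).resolve_left hc
  ext i j
  rw [Matrix.zero_apply]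
  by_cases hiz : i = z
  · rw [hiz]
    by_cases hjz : j = z
    · rw [hjz]; have := hanti z z; linarith
    · rw [step2 j hjz, hzo0]
  · by_cases hjz : j = z
    · have h := hanti z i
      rw [step2 i hiz, hzo0, neg_zero] at h
      rw [hjz, h]
    · exact step1 i j hiz hjz

lemma A6_refute (hn : 4 ≤ n) (z o t : Fin n) (hzo : z ≠ o) (hzt : z ≠ t) (hot : o ≠ t)
    (w : Matrix (Fin n) (Fin n) ℝ) (hw : w ∈ V6 n)
    (hfix : ∀ σ : Equiv.Perm (Fin n), σ z = z → act n σ w = w) : w = 0 := by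
  obtain ⟨hT, hrow, hdiag⟩ := hw
  have hsym : ∀ i j, w j i = w i j := by
    intro i j
    have := Matrix.ext_iff.2 hT j i
    rwa [Matrix.transpose_apply] at this
  have e : ∀ p q : Fin n, p ≠ z → q ≠ z →
      ∀ i j, w (Equiv.swap p q i) (Equiv.swap p q j) = w i j := by
    intro p q hp hq i j
    have hfz : Equiv.swap p q z = z := Equiv.swap_apply_of_ne_of_ne hp.symm hq.symm
    have := Matrix.ext_iff.2 (hfix (Equiv.swap p q) hfz) i j
    rwa [act_apply, Equiv.swap_inv] at this
  have hcast : (4 : ℝ) ≤ (n : ℝ) := by exact_mod_cast hn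
  -- row z
  have step2 : ∀ j, j ≠ z → w z j = w z o := by
    intro j hjz
    by_cases hjo : j = o
    · rw [hjo]
    · have h := e j o hjz hzo.symm z j
      rw [Equiv.swap_apply_of_ne_of_ne hjz.symm hzo, Equiv.swap_apply_left] at h
      exact h.symm
  have hzo0 : w z o = 0 := by
    have hs := hrow z
    have hptw : ∀ j, w z j = (if j = z then (0 : ℝ) else w z o) := by
      intro j
      by_cases hjz : j = z
      · rw [if_pos hjz, hjz]; exact hdiag z
      · rw [if_neg hjz]; exact step2 j hjz
    rw [Finset.sum_congr rfl (fun j _ => hptw j), sum_if_one n z (w z o)] at hs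
    have hc : (n : ℝ) - 1 ≠ 0 := by linarith
    exact (mul_eq_zero.mp hs).resolve_left hc
  have hzrow : ∀ j, w z j = 0 := by
    intro j
    by_cases hjz : j = z
    · rw [hjz]; exact hdiag z
    · rw [step2 j hjz, hzo0]
  -- row o
  have step3 : ∀ j, j ≠ z → j ≠ o → w o j = w o t := by
    intro j hjz hjo
    by_cases hjt : j = t
    · rw [hjt]
    · have h := e j t hjz hzt.symm o j
      rw [Equiv.swap_apply_of_ne_of_ne hjo.symm hot, Equiv.swap_apply_left] at h
      exact h.symm
  have hot0 : w o t = 0 := by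
    have hs := hrow o
    have hptw : ∀ j, w o j = (if j = z then (0 : ℝ) else if j = o then 0 else w o t) := by
      intro j
      by_cases hjz : j = z
      · rw [if_pos hjz, hjz, hsym z o]
        exact hzo0
      · rw [if_neg hjz]
        by_cases hjo : j = o
        · rw [if_pos hjo, hjo]; exact hdiag o
        · rw [if_neg hjo]; exact step3 j hjz hjo
    rw [Finset.sum_congr rfl (fun j _ => hptw j), sum_if_two n z o hzo (w o t)] at hs
    have hc : (n : ℝ) - 2 ≠ 0 := by linarith
    exact (mul_eq_zero.mp hs).resolve_left hc
  have horow : ∀ j, w o j = 0 := by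
    intro j
    by_cases hjz : j = z
    · rw [hjz, hsym z o]
      exact hzo0
    · by_cases hjo : j = o
      · rw [hjo]; exact hdiag o
      · rw [step3 j hjz hjo, hot0]
  ext i j
  rw [Matrix.zero_apply]
  by_cases hiz : i = z
  · rw [hiz]; exact hzrow j
  · by_cases hio : i = o
    · rw [hio]; exact horow j
    · have h := e o i hzo.symm hiz i j
      rw [Equiv.swap_apply_right] at h
      rw [← h]
      exact horow (Equiv.swap o i j)
lemma act_smul_mat (σ : Equiv.Perm (Fin n)) (c : ℝ) (M : Matrix (Fin n) (Fin n) ℝ) :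
    act n σ (c • M) = c • act n σ M := by
  ext i j
  simp [act_apply, Matrix.smul_apply]

lemma act_J_sub_one (σ : Equiv.Perm (Fin n)) :
    act n σ (J n - 1) = J n - 1 := by
  ext i j
  simp only [act_apply, Matrix.sub_apply, Matrix.one_apply, J, Matrix.of_apply]
  by_cases hij : i = j
  · rw [if_pos hij, if_pos ((Equiv.apply_eq_iff_eq σ⁻¹).2 hij)]
  · rw [if_neg hij, if_neg (fun h => hij ((Equiv.apply_eq_iff_eq σ⁻¹).1 h))]

lemma exists_iso_01 (hn : 4 ≤ n) :
    ∃ L : V0 n →ₗ[ℝ] V1 n, Function.Bijective L ∧ IsEquivariantMap n L := by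
  have h0 : (0 : ℕ) < n := by omega
  have h1 : (1 : ℕ) < n := by omega
  set z : Fin n := ⟨0, h0⟩ with hzdef
  set o : Fin n := ⟨1, h1⟩ with hodef
  have hzo : z ≠ o := Fin.ne_of_val_ne (by norm_num)
  have hJ1 : (J n - 1) z o = 1 := by
    simp [J, Matrix.sub_apply, Matrix.one_apply, hzo]
  have hdiag : ∀ (X : V0 n) (i : Fin n),
      (X : Matrix (Fin n) (Fin n) ℝ) i i = (X : Matrix (Fin n) (Fin n) ℝ) z z := by
    rintro ⟨X, a, rfl⟩ i
    simp [Matrix.smul_apply, Matrix.one_apply]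
  refine ⟨{ toFun := fun X => ⟨(X : Matrix (Fin n) (Fin n) ℝ) z z • (J n - 1), ⟨_, rfl⟩⟩,
            map_add' := ?_, map_smul' := ?_ }, ⟨?_, ?_⟩, ?_⟩
  · intro X Y
    apply Subtype.ext
    simp [Matrix.add_apply, add_smul]
  · intro c X
    apply Subtype.ext
    simp only [Submodule.coe_smul, Matrix.smul_apply, smul_eq_mul, RingHom.id_apply]
    exact mul_smul c _ _
  · -- injective
    intro X Y h
    have h2 : (X : Matrix (Fin n) (Fin n) ℝ) z z • (J n - 1)
        = (Y : Matrix (Fin n) (Fin n) ℝ) z z • (J n - 1) := congrArg Subtype.val h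
    have h3 := Matrix.ext_iff.2 h2 z o
    rw [Matrix.smul_apply, Matrix.smul_apply, hJ1, smul_eq_mul, smul_eq_mul,
      mul_one, mul_one] at h3
    obtain ⟨a, ha⟩ := X.2
    obtain ⟨b, hb⟩ := Y.2
    have hXa : (X : Matrix (Fin n) (Fin n) ℝ) z z = a := by
      rw [ha]; simp [Matrix.smul_apply, Matrix.one_apply]
    have hYb : (Y : Matrix (Fin n) (Fin n) ℝ) z z = b := by
      rw [hb]; simp [Matrix.smul_apply, Matrix.one_apply]
    apply Subtype.ext
    rw [ha, hb]
    rw [hXa, hYb] at h3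
    rw [h3]
  · -- surjective
    rintro ⟨M, hM⟩
    obtain ⟨a, rfl⟩ := hM
    refine ⟨⟨a • (1 : Matrix (Fin n) (Fin n) ℝ), ⟨a, rfl⟩⟩, ?_⟩
    apply Subtype.ext
    simp [Matrix.smul_apply, Matrix.one_apply]
  · -- equivariant
    intro σ X h
    show (act n σ (X : Matrix (Fin n) (Fin n) ℝ)) z z • (J n - 1)
        = act n σ ((X : Matrix (Fin n) (Fin n) ℝ) z z • (J n - 1))
    have hX : (act n σ (X : Matrix (Fin n) (Fin n) ℝ)) z z
        = (X : Matrix (Fin n) (Fin n) ℝ) z z := by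
      obtain ⟨a, ha⟩ := X.2
      rw [act_apply, ha]
      simp [Matrix.smul_apply, Matrix.one_apply]
    rw [hX, act_smul_mat, act_J_sub_one]

lemma exists_iso_23 (hn : 4 ≤ n) :
    ∃ L : V2 n →ₗ[ℝ] V3 n, Function.Bijective L ∧ IsEquivariantMap n L := by
  have h0 : (0 : ℕ) < n := by omega
  set z : Fin n := ⟨0, h0⟩ with hzdef
  refine ⟨{ toFun := fun X => ⟨Matrix.of fun i _ => (X : Matrix (Fin n) (Fin n) ℝ) i i,
              ⟨fun i => (X : Matrix (Fin n) (Fin n) ℝ) i i, X.2.2, rfl⟩⟩,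
            map_add' := ?_, map_smul' := ?_ }, ⟨?_, ?_⟩, ?_⟩
  · intro X Y
    apply Subtype.ext
    ext i j
    simp [Matrix.add_apply]
  · intro c X
    apply Subtype.ext
    ext i j
    simp [Matrix.smul_apply]
  · -- injective
    intro X Y h
    have h2 : (Matrix.of fun i _ => (X : Matrix (Fin n) (Fin n) ℝ) i i)
        = (Matrix.of fun i _ => (Y : Matrix (Fin n) (Fin n) ℝ) i i) := congrArg Subtype.val h
    apply Subtype.ext
    ext i j
    by_cases hij : i = j
    · have h3 := Matrix.ext_iff.2 h2 i z
      simp only [Matrix.of_apply] at h3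
      rw [hij] at h3 ⊢
      exact h3
    · rw [X.2.1 i j hij, Y.2.1 i j hij]
  · -- surjective
    rintro ⟨M, hM⟩
    obtain ⟨r, hr, rfl⟩ := hM
    refine ⟨⟨Matrix.of fun i j => if i = j then r i else 0,
      ⟨fun i j hij => if_neg hij, by simp [hr]⟩⟩, ?_⟩
    apply Subtype.ext
    ext i j
    simp
  · -- equivariant
    intro σ X h
    ext i j
    rfl

lemma exists_iso_24 (hn : 4 ≤ n) :
    ∃ L : V2 n →ₗ[ℝ] V4 n, Function.Bijective L ∧ IsEquivariantMap n L := by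
  have h0 : (0 : ℕ) < n := by omega
  set z : Fin n := ⟨0, h0⟩ with hzdef
  refine ⟨{ toFun := fun X => ⟨Matrix.of fun _ j => (X : Matrix (Fin n) (Fin n) ℝ) j j,
              ⟨fun j => (X : Matrix (Fin n) (Fin n) ℝ) j j, X.2.2, rfl⟩⟩,
            map_add' := ?_, map_smul' := ?_ }, ⟨?_, ?_⟩, ?_⟩
  · intro X Y
    apply Subtype.ext
    ext i j
    simp [Matrix.add_apply]
  · intro c X
    apply Subtype.ext
    ext i j
    simp [Matrix.smul_apply]
  · intro X Y h
    have h2 := Subtype.ext_iff.1 h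
    replace h2 : (Matrix.of fun _ j => (X : Matrix (Fin n) (Fin n) ℝ) j j)
        = (Matrix.of fun _ j => (Y : Matrix (Fin n) (Fin n) ℝ) j j) := h2
    apply Subtype.ext
    ext i j
    by_cases hij : i = j
    · have h3 := Matrix.ext_iff.2 h2 z j
      simp only [Matrix.of_apply] at h3
      rw [hij]
      exact h3
    · rw [X.2.1 i j hij, Y.2.1 i j hij]
  · rintro ⟨M, hM⟩
    obtain ⟨r, hr, rfl⟩ := hM
    refine ⟨⟨Matrix.of fun i j => if i = j then r i else 0,
      ⟨fun i j hij => if_neg hij, by simp [hr]⟩⟩, ?_⟩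
    apply Subtype.ext
    ext i j
    simp
  · intro σ X h
    ext i j
    rfl
lemma neg_transfer {U W : Submodule ℝ (Matrix (Fin n) (Fin n) ℝ)} (L : U →ₗ[ℝ] W)
    (he : IsEquivariantMap n L) (σ : Equiv.Perm (Fin n)) (X : U)
    (h : act n σ (X : Matrix (Fin n) (Fin n) ℝ) = -(X : Matrix (Fin n) (Fin n) ℝ)) :
    act n σ ((L X : W) : Matrix (Fin n) (Fin n) ℝ)
      = -((L X : W) : Matrix (Fin n) (Fin n) ℝ) := by
  have := transfer_eigen n L he σ X (-1) (by rw [h, neg_one_smul])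
  rwa [neg_one_smul] at this

lemma pos_transfer {U W : Submodule ℝ (Matrix (Fin n) (Fin n) ℝ)} (L : U →ₗ[ℝ] W)
    (he : IsEquivariantMap n L) (σ : Equiv.Perm (Fin n)) (X : U)
    (h : act n σ (X : Matrix (Fin n) (Fin n) ℝ) = (X : Matrix (Fin n) (Fin n) ℝ)) :
    act n σ ((L X : W) : Matrix (Fin n) (Fin n) ℝ)
      = ((L X : W) : Matrix (Fin n) (Fin n) ℝ) := by
  have := transfer_eigen n L he σ X 1 (by rw [h, one_smul])
  rwa [one_smul] at this

section noiso
variable (hn : 4 ≤ n)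

lemma no02 (hn : 4 ≤ n) (L : V0 n →ₗ[ℝ] V2 n) (hb : Function.Bijective L)
    (he : IsEquivariantMap n L) : False := by
  have hmem : (1 : Matrix (Fin n) (Fin n) ℝ) ∈ V0 n := ⟨1, (one_smul ℝ _).symm⟩
  set X : V0 n := ⟨1, hmem⟩
  have hfix : ∀ σ : Equiv.Perm (Fin n),
      act n σ ((L X : V2 n) : Matrix (Fin n) (Fin n) ℝ) = (L X : Matrix (Fin n) (Fin n) ℝ) :=
    fun σ => pos_transfer n L he σ X (act_one n σ)
  have h0 := C2_refute n hn _ (L X).2 hfix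
  exact one_matrix_ne n hn (kill_of_zero n L hb X h0)

lemma no05 (hn : 4 ≤ n) (L : V0 n →ₗ[ℝ] V5 n) (hb : Function.Bijective L)
    (he : IsEquivariantMap n L) : False := by
  have hab : (⟨0, by omega⟩ : Fin n) ≠ ⟨1, by omega⟩ := Fin.ne_of_val_ne (by norm_num)
  have hmem : (1 : Matrix (Fin n) (Fin n) ℝ) ∈ V0 n := ⟨1, (one_smul ℝ _).symm⟩
  set X : V0 n := ⟨1, hmem⟩
  have hfix : ∀ σ : Equiv.Perm (Fin n), σ ⟨0, by omega⟩ = ⟨0, by omega⟩ →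
      act n σ ((L X : V5 n) : Matrix (Fin n) (Fin n) ℝ) = (L X : Matrix (Fin n) (Fin n) ℝ) :=
    fun σ _ => pos_transfer n L he σ X (act_one n σ)
  have h0 := A5_refute n hn _ _ hab _ (L X).2 hfix
  exact one_matrix_ne n hn (kill_of_zero n L hb X h0)

lemma no06 (hn : 4 ≤ n) (L : V0 n →ₗ[ℝ] V6 n) (hb : Function.Bijective L)
    (he : IsEquivariantMap n L) : False := by
  have hab : (⟨0, by omega⟩ : Fin n) ≠ ⟨1, by omega⟩ := Fin.ne_of_val_ne (by norm_num)
  have hac : (⟨0, by omega⟩ : Fin n) ≠ ⟨2, by omega⟩ := Fin.ne_of_val_ne (by norm_num)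
  have hbc : (⟨1, by omega⟩ : Fin n) ≠ ⟨2, by omega⟩ := Fin.ne_of_val_ne (by norm_num)
  have hmem : (1 : Matrix (Fin n) (Fin n) ℝ) ∈ V0 n := ⟨1, (one_smul ℝ _).symm⟩
  set X : V0 n := ⟨1, hmem⟩
  have hfix : ∀ σ : Equiv.Perm (Fin n), σ ⟨0, by omega⟩ = ⟨0, by omega⟩ →
      act n σ ((L X : V6 n) : Matrix (Fin n) (Fin n) ℝ) = (L X : Matrix (Fin n) (Fin n) ℝ) :=
    fun σ _ => pos_transfer n L he σ X (act_one n σ)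
  have h0 := A6_refute n hn _ _ _ hab hac hbc _ (L X).2 hfix
  exact one_matrix_ne n hn (kill_of_zero n L hb X h0)

lemma no20 (hn : 4 ≤ n) (L : V2 n →ₗ[ℝ] V0 n) (hb : Function.Bijective L)
    (he : IsEquivariantMap n L) : False := by
  set a : Fin n := ⟨0, by omega⟩
  set b : Fin n := ⟨1, by omega⟩
  set c : Fin n := ⟨2, by omega⟩
  have hab : a ≠ b := Fin.ne_of_val_ne (by norm_num)
  have hca : c ≠ a := Fin.ne_of_val_ne (by norm_num)
  have hcb : c ≠ b := Fin.ne_of_val_ne (by norm_num)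
  set X : V2 n := ⟨diagI n a b, diagI_mem n a b hab⟩
  have h1 := neg_transfer n L he (Equiv.swap a b) X (act_swap_diagI n a b hab)
  have h0 := V0_refute n a b c hca hcb _ (L X).2 h1
  exact diagI_ne n a b (kill_of_zero n L hb X h0)

lemma no25 (hn : 4 ≤ n) (L : V2 n →ₗ[ℝ] V5 n) (hb : Function.Bijective L)
    (he : IsEquivariantMap n L) : False := by
  set a : Fin n := ⟨0, by omega⟩ with hadef
  set b : Fin n := ⟨1, by omega⟩
  have hab : a ≠ b := Fin.ne_of_val_ne (by norm_num)
  set X : V2 n := ⟨DM n a, DM_mem n a⟩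
  have hfix : ∀ σ : Equiv.Perm (Fin n), σ a = a →
      act n σ ((L X : V5 n) : Matrix (Fin n) (Fin n) ℝ) = (L X : Matrix (Fin n) (Fin n) ℝ) :=
    fun σ hσ => pos_transfer n L he σ X (act_DM n a σ hσ)
  have h0 := A5_refute n hn a b hab _ (L X).2 hfix
  exact DM_ne n hn a (kill_of_zero n L hb X h0)

lemma no26 (hn : 4 ≤ n) (L : V2 n →ₗ[ℝ] V6 n) (hb : Function.Bijective L)
    (he : IsEquivariantMap n L) : False := by
  set a : Fin n := ⟨0, by omega⟩
  set b : Fin n := ⟨1, by omega⟩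
  set c : Fin n := ⟨2, by omega⟩
  have hab : a ≠ b := Fin.ne_of_val_ne (by norm_num)
  have hac : a ≠ c := Fin.ne_of_val_ne (by norm_num)
  have hbc : b ≠ c := Fin.ne_of_val_ne (by norm_num)
  set X : V2 n := ⟨DM n a, DM_mem n a⟩
  have hfix : ∀ σ : Equiv.Perm (Fin n), σ a = a →
      act n σ ((L X : V6 n) : Matrix (Fin n) (Fin n) ℝ) = (L X : Matrix (Fin n) (Fin n) ℝ) :=
    fun σ hσ => pos_transfer n L he σ X (act_DM n a σ hσ)
  have h0 := A6_refute n hn a b c hab hac hbc _ (L X).2 hfix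
  exact DM_ne n hn a (kill_of_zero n L hb X h0)

lemma no50 (hn : 4 ≤ n) (L : V5 n →ₗ[ℝ] V0 n) (hb : Function.Bijective L)
    (he : IsEquivariantMap n L) : False := by
  set a : Fin n := ⟨0, by omega⟩
  set b : Fin n := ⟨1, by omega⟩
  set c : Fin n := ⟨2, by omega⟩
  set d : Fin n := ⟨3, by omega⟩
  have hab : a ≠ b := Fin.ne_of_val_ne (by norm_num)
  have hac : a ≠ c := Fin.ne_of_val_ne (by norm_num)
  have had : a ≠ d := Fin.ne_of_val_ne (by norm_num)
  have hbc : b ≠ c := Fin.ne_of_val_ne (by norm_num)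
  have hbd : b ≠ d := Fin.ne_of_val_ne (by norm_num)
  set X : V5 n := ⟨wedgeM n a b c d, wedgeM_mem n a b c d hab (Fin.ne_of_val_ne (by norm_num))⟩
  have h1 := neg_transfer n L he (Equiv.swap a b) X (act_swap_wedge_ab n a b c d hab hac had hbc hbd)
  have h0 := V0_refute n a b c hac.symm hbc.symm _ (L X).2 h1
  exact wedgeM_ne n a b c d hac had hbc (kill_of_zero n L hb X h0)

lemma no52 (hn : 4 ≤ n) (L : V5 n →ₗ[ℝ] V2 n) (hb : Function.Bijective L)
    (he : IsEquivariantMap n L) : False := by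
  set a : Fin n := ⟨0, by omega⟩
  set b : Fin n := ⟨1, by omega⟩
  set c : Fin n := ⟨2, by omega⟩
  set d : Fin n := ⟨3, by omega⟩
  have hab : a ≠ b := Fin.ne_of_val_ne (by norm_num)
  have hac : a ≠ c := Fin.ne_of_val_ne (by norm_num)
  have had : a ≠ d := Fin.ne_of_val_ne (by norm_num)
  have hbc : b ≠ c := Fin.ne_of_val_ne (by norm_num)
  have hbd : b ≠ d := Fin.ne_of_val_ne (by norm_num)
  have hcd : c ≠ d := Fin.ne_of_val_ne (by norm_num)
  set X : V5 n := ⟨wedgeM n a b c d, wedgeM_mem n a b c d hab hcd⟩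
  have h1 := neg_transfer n L he (Equiv.swap a b) X (act_swap_wedge_ab n a b c d hab hac had hbc hbd)
  have h2 := neg_transfer n L he (Equiv.swap c d) X (act_swap_wedge_cd n a b c d hac had hbc hbd hcd)
  have h0 := V2_refute n a b c d hac had hbc hbd _ (L X).2 h1 h2
  exact wedgeM_ne n a b c d hac had hbc (kill_of_zero n L hb X h0)

lemma no56 (hn : 4 ≤ n) (L : V5 n →ₗ[ℝ] V6 n) (hb : Function.Bijective L)
    (he : IsEquivariantMap n L) : False := by
  set a : Fin n := ⟨0, by omega⟩
  set b : Fin n := ⟨1, by omega⟩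
  set c : Fin n := ⟨2, by omega⟩
  set d : Fin n := ⟨3, by omega⟩
  have hab : a ≠ b := Fin.ne_of_val_ne (by norm_num)
  have hac : a ≠ c := Fin.ne_of_val_ne (by norm_num)
  have had : a ≠ d := Fin.ne_of_val_ne (by norm_num)
  have hbc : b ≠ c := Fin.ne_of_val_ne (by norm_num)
  have hbd : b ≠ d := Fin.ne_of_val_ne (by norm_num)
  have hcd : c ≠ d := Fin.ne_of_val_ne (by norm_num)
  set X : V5 n := ⟨wedgeM n a b c d, wedgeM_mem n a b c d hab hcd⟩
  have h1 := neg_transfer n L he (Equiv.swap a b) X (act_swap_wedge_ab n a b c d hab hac had hbc hbd)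
  have h2 := neg_transfer n L he (Equiv.swap c d) X (act_swap_wedge_cd n a b c d hac had hbc hbd hcd)
  have h3 := neg_transfer n L he (Equiv.swap a c * Equiv.swap b d) X
    (act_pi_wedge n a b c d hab hac had hbc hbd hcd)
  have h0 := V6_refute n a b c d hab hac had hbc hbd hcd _ (L X).2 h1 h2 h3
  exact wedgeM_ne n a b c d hac had hbc (kill_of_zero n L hb X h0)

lemma no60 (hn : 4 ≤ n) (L : V6 n →ₗ[ℝ] V0 n) (hb : Function.Bijective L)
    (he : IsEquivariantMap n L) : False := by
  set a : Fin n := ⟨0, by omega⟩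
  set b : Fin n := ⟨1, by omega⟩
  set c : Fin n := ⟨2, by omega⟩
  set d : Fin n := ⟨3, by omega⟩
  have hab : a ≠ b := Fin.ne_of_val_ne (by norm_num)
  have hac : a ≠ c := Fin.ne_of_val_ne (by norm_num)
  have had : a ≠ d := Fin.ne_of_val_ne (by norm_num)
  have hbc : b ≠ c := Fin.ne_of_val_ne (by norm_num)
  have hbd : b ≠ d := Fin.ne_of_val_ne (by norm_num)
  have hcd : c ≠ d := Fin.ne_of_val_ne (by norm_num)
  set X : V6 n := ⟨symM n a b c d, symM_mem n a b c d hab hac had hbc hbd hcd⟩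
  have h1 := neg_transfer n L he (Equiv.swap a b) X (act_swap_sym_ab n a b c d hab hac had hbc hbd)
  have h0 := V0_refute n a b c hac.symm hbc.symm _ (L X).2 h1
  exact symM_ne n a b c d hab hac had hbc hbd hcd (kill_of_zero n L hb X h0)

lemma no62 (hn : 4 ≤ n) (L : V6 n →ₗ[ℝ] V2 n) (hb : Function.Bijective L)
    (he : IsEquivariantMap n L) : False := by
  set a : Fin n := ⟨0, by omega⟩
  set b : Fin n := ⟨1, by omega⟩
  set c : Fin n := ⟨2, by omega⟩
  set d : Fin n := ⟨3, by omega⟩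
  have hab : a ≠ b := Fin.ne_of_val_ne (by norm_num)
  have hac : a ≠ c := Fin.ne_of_val_ne (by norm_num)
  have had : a ≠ d := Fin.ne_of_val_ne (by norm_num)
  have hbc : b ≠ c := Fin.ne_of_val_ne (by norm_num)
  have hbd : b ≠ d := Fin.ne_of_val_ne (by norm_num)
  have hcd : c ≠ d := Fin.ne_of_val_ne (by norm_num)
  set X : V6 n := ⟨symM n a b c d, symM_mem n a b c d hab hac had hbc hbd hcd⟩
  have h1 := neg_transfer n L he (Equiv.swap a b) X (act_swap_sym_ab n a b c d hab hac had hbc hbd)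
  have h2 := neg_transfer n L he (Equiv.swap c d) X (act_swap_sym_cd n a b c d hac had hbc hbd hcd)
  have h0 := V2_refute n a b c d hac had hbc hbd _ (L X).2 h1 h2
  exact symM_ne n a b c d hab hac had hbc hbd hcd (kill_of_zero n L hb X h0)

lemma no65 (hn : 4 ≤ n) (L : V6 n →ₗ[ℝ] V5 n) (hb : Function.Bijective L)
    (he : IsEquivariantMap n L) : False := by
  set a : Fin n := ⟨0, by omega⟩
  set b : Fin n := ⟨1, by omega⟩
  set c : Fin n := ⟨2, by omega⟩
  set d : Fin n := ⟨3, by omega⟩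
  have hab : a ≠ b := Fin.ne_of_val_ne (by norm_num)
  have hac : a ≠ c := Fin.ne_of_val_ne (by norm_num)
  have had : a ≠ d := Fin.ne_of_val_ne (by norm_num)
  have hbc : b ≠ c := Fin.ne_of_val_ne (by norm_num)
  have hbd : b ≠ d := Fin.ne_of_val_ne (by norm_num)
  have hcd : c ≠ d := Fin.ne_of_val_ne (by norm_num)
  set X : V6 n := ⟨symM n a b c d, symM_mem n a b c d hab hac had hbc hbd hcd⟩
  have h1 := neg_transfer n L he (Equiv.swap a b) X (act_swap_sym_ab n a b c d hab hac had hbc hbd)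
  have h2 := neg_transfer n L he (Equiv.swap c d) X (act_swap_sym_cd n a b c d hac had hbc hbd hcd)
  have h3 := pos_transfer n L he (Equiv.swap a c * Equiv.swap b d) X
    (act_pi_sym n a b c d hab hac had hbc hbd hcd)
  have h0 := V5_refute n a b c d hab hac had hbc hbd hcd _ (L X).2 h1 h2 h3
  exact symM_ne n a b c d hab hac had hbc hbd hcd (kill_of_zero n L hb X h0)

end noiso
/-- For `n ≥ 4` there are `Sₙ`-equivariant linear bijections
`V₀ → V₁`, `V₂ → V₃` and `V₂ → V₄`, but no equivariant linear bijection between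
any two distinct spaces among `{V₀, V₂, V₅, V₆}`. -/
theorem isomorphism_types (hn : 4 ≤ n) :
    (∃ L : V n 0 →ₗ[ℝ] V n 1, Function.Bijective L ∧ IsEquivariantMap n L) ∧
    (∃ L : V n 2 →ₗ[ℝ] V n 3, Function.Bijective L ∧ IsEquivariantMap n L) ∧
    (∃ L : V n 2 →ₗ[ℝ] V n 4, Function.Bijective L ∧ IsEquivariantMap n L) ∧
    (∀ i j : Fin 7, i ∈ ({0, 2, 5, 6} : Set (Fin 7)) → j ∈ ({0, 2, 5, 6} : Set (Fin 7)) →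
      i ≠ j → ¬∃ L : V n i →ₗ[ℝ] V n j, Function.Bijective L ∧ IsEquivariantMap n L) := by
  refine ⟨exists_iso_01 n hn, exists_iso_23 n hn, exists_iso_24 n hn, ?_⟩
  intro i j hi hj hij
  rintro ⟨L, hb, he⟩
  simp only [Set.mem_insert_iff, Set.mem_singleton_iff] at hi hj
  rcases hi with rfl | rfl | rfl | rfl <;> rcases hj with rfl | rfl | rfl | rfl
  · exact hij rfl
  · exact no02 n hn L hb he
  · exact no05 n hn L hb he
  · exact no06 n hn L hb he
  · exact no20 n hn L hb he
  · exact hij rfl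
  · exact no25 n hn L hb he
  · exact no26 n hn L hb he
  · exact no50 n hn L hb he
  · exact no52 n hn L hb he
  · exact hij rfl
  · exact no56 n hn L hb he
  · exact no60 n hn L hb he
  · exact no62 n hn L hb he
  · exact no65 n hn L hb he
  · exact hij rfl

end GraphIso
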